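/- Let G be a group that is not cyclic. Suppose that the subgroup of G generated by the set of elements of order 2 or 4 (i.e. Subgroup.closure {x ∈ G : orderOf x = 2 ∨ orderOf x = 4}) is a proper subgroup of G, and that the center of G contains no element of order 2. Then G has no Lee weight. -/
import Mathlib


/-- A weight on a group `G`: vanishes exactly at the identity, is symmetric
under inversion, and satisfies the triangle inequality. -/
def IsWeight {G : Type*} [Group G] (w : G → ℕ) : Prop :=
  (∀ x, w x = 0 ↔ x = 1) ∧ (∀ x, w x⁻¹ = w x) ∧ ∀ x y, w (x * y) ≤ w x + w y

/-- A weight is gapless if its set of values is an initial segment of `ℕ`. -/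
def Gapless {G : Type*} (w : G → ℕ) : Prop :=
  ∀ g : G, ∀ m : ℕ, m ≤ w g → ∃ h : G, w h = m

/-- Two weights are `𝒫`-equivalent if they induce the same partition of `G`
into level sets. -/
def PEquivW {G : Type*} (w w' : G → ℕ) : Prop :=
  ∀ g h : G, w g = w h ↔ w' g = w' h

/-- A group has a Lee weight (equivalently, a Lee metric) if it has a gapless
weight whose level sets are exactly the sets `{a, a⁻¹}`. -/
def HasLeeWeight (G : Type*) [Group G] : Prop :=
  ∃ w : G → ℕ, IsWeight w ∧ Gapless w ∧ ∀ g h : G, w g = w h ↔ (g = h ∨ g = h⁻¹)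

/-- Pure group-theoretic case analysis: if the four products `a*g, a⁻¹*g, g*a, g*a⁻¹`
all lie in the two-element set `{a*g, (a*g)⁻¹}`, then either `a` and `g` commute,
or both `a` and `g` have order dividing 4. -/
private lemma lee_bII {G : Type*} [Group G] {a g : G}
    (h1 : a⁻¹ * g = a * g ∨ a⁻¹ * g = (a * g)⁻¹)
    (h2 : g * a = a * g ∨ g * a = (a * g)⁻¹)
    (h3 : g * a⁻¹ = a * g ∨ g * a⁻¹ = (a * g)⁻¹) :
    a * g = g * a ∨ ((g * g) * (g * g) = 1 ∧ (a * a) * (a * a) = 1) := by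
  rcases h2 with h2 | h2
  · exact Or.inl h2.symm
  -- h2 : g * a = (a*g)⁻¹, so (g*g)*(a*a) = 1
  have E2 : (g * g) * (a * a) = 1 := by
    calc (g * g) * (a * a) = g * (g * a) * a := by group
      _ = g * (a * g)⁻¹ * a := by rw [h2]
      _ = 1 := by group
  rcases h1 with h1 | h1
  · -- a⁻¹ * g = a * g  ⇒  a*a = 1  ⇒  g*g = 1
    have ha2 : a * a = 1 := by
      have h : a⁻¹ = a := mul_right_cancel h1
      rw [show a * a = a * a⁻¹ by rw [h]]
      group
    have hg2 : g * g = 1 := by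
      rw [ha2, mul_one] at E2; exact E2
    exact Or.inr ⟨by rw [hg2, one_mul], by rw [ha2, one_mul]⟩
  · -- h1 : a⁻¹ * g = (a*g)⁻¹, i.e. g⁻¹ * a = a * g
    have E1 : g⁻¹ * a = a * g := by
      rw [← inv_inv (a * g), ← h1]; group
    rcases h3 with h3 | h3
    · -- h3 : g * a⁻¹ = a * g, so g⁻¹ * a = g * a⁻¹, hence g*g = a*a
      have e : g⁻¹ * a = g * a⁻¹ := by rw [E1, h3]
      have hg2 : g * g = a * a := by
        calc g * g = g * (g * a⁻¹) * a := by group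
          _ = g * (g⁻¹ * a) * a := by rw [← e]
          _ = a * a := by group
      rw [hg2] at E2
      exact Or.inr ⟨by rw [hg2]; exact E2, E2⟩
    · -- h3 : g * a⁻¹ = (a*g)⁻¹ = g⁻¹ * a⁻¹ ⇒ g = g⁻¹
      have e : g * a⁻¹ = g⁻¹ * a⁻¹ := by rw [h3, mul_inv_rev]
      have hgg : g = g⁻¹ := mul_right_cancel e
      have hg2 : g * g = 1 := mul_eq_one_iff_eq_inv.2 hgg
      have ha2 : a * a = 1 := by rw [hg2, one_mul] at E2; exact E2
      exact Or.inr ⟨by rw [hg2, one_mul], by rw [ha2, one_mul]⟩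

/-- The master local lemma for a Lee weight: for every `g`, either some neighbour of `g`
(under one-sided multiplication by `a` of weight 1) has strictly smaller weight, or
`g² = a^{±1}`, or `a` and `g` commute, or both have order dividing 4. -/
private lemma lee_M {G : Type*} [Group G] (w : G → ℕ)
    (hinv : ∀ x : G, w x⁻¹ = w x) (htri : ∀ x y : G, w (x * y) ≤ w x + w y)
    (hcls : ∀ g h : G, w g = w h ↔ (g = h ∨ g = h⁻¹))
    {a : G} (ha : w a = 1) (ha1 : a ≠ 1) (g : G) :
    (w (a * g) < w g ∨ w (a⁻¹ * g) < w g ∨ w (g * a) < w g ∨ w (g * a⁻¹) < w g)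
    ∨ (g * g = a ∨ g * g = a⁻¹)
    ∨ a * g = g * a
    ∨ ((g * g) * (g * g) = 1 ∧ (a * a) * (a * a) = 1) := by
  have hainv : w a⁻¹ = 1 := by rw [hinv]; exact ha
  have u1 : w (a * g) ≤ w g + 1 := by have := htri a g; omega
  have u2 : w (a⁻¹ * g) ≤ w g + 1 := by have := htri a⁻¹ g; omega
  have u3 : w (g * a) ≤ w g + 1 := by have := htri g a; omega
  have u4 : w (g * a⁻¹) ≤ w g + 1 := by have := htri g a⁻¹; omega
  by_cases c1 : w (a * g) < w g
  · exact Or.inl (Or.inl c1)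
  by_cases c2 : w (a⁻¹ * g) < w g
  · exact Or.inl (Or.inr (Or.inl c2))
  by_cases c3 : w (g * a) < w g
  · exact Or.inl (Or.inr (Or.inr (Or.inl c3)))
  by_cases c4 : w (g * a⁻¹) < w g
  · exact Or.inl (Or.inr (Or.inr (Or.inr c4)))
  by_cases e1 : w (a * g) = w g
  · rcases (hcls _ _).1 e1 with h | h
    · exact absurd (mul_right_cancel (show a * g = 1 * g by rw [one_mul]; exact h)) ha1
    · have e' : a = g⁻¹ * g⁻¹ := by simpa using congrArg (· * g⁻¹) h
      refine Or.inr (Or.inl (Or.inr ?_))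
      rw [e', mul_inv_rev, inv_inv]
  by_cases e2 : w (a⁻¹ * g) = w g
  · rcases (hcls _ _).1 e2 with h | h
    · have h' : a⁻¹ = 1 := mul_right_cancel (show a⁻¹ * g = 1 * g by rw [one_mul]; exact h)
      exact absurd (inv_eq_one.mp h') ha1
    · have e' : a⁻¹ = g⁻¹ * g⁻¹ := by simpa using congrArg (· * g⁻¹) h
      refine Or.inr (Or.inl (Or.inl ?_))
      rw [← inv_inv a, e', mul_inv_rev, inv_inv]
  by_cases e3 : w (g * a) = w g
  · rcases (hcls _ _).1 e3 with h | h
    · exact absurd (mul_left_cancel (show g * a = g * 1 by rw [mul_one]; exact h)) ha1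
    · have e' : a = g⁻¹ * g⁻¹ := by simpa using congrArg (g⁻¹ * ·) h
      refine Or.inr (Or.inl (Or.inr ?_))
      rw [e', mul_inv_rev, inv_inv]
  by_cases e4 : w (g * a⁻¹) = w g
  · rcases (hcls _ _).1 e4 with h | h
    · have h' : a⁻¹ = 1 := mul_left_cancel (show g * a⁻¹ = g * 1 by rw [mul_one]; exact h)
      exact absurd (inv_eq_one.mp h') ha1
    · have e' : a⁻¹ = g⁻¹ * g⁻¹ := by simpa using congrArg (g⁻¹ * ·) h
      refine Or.inr (Or.inl (Or.inl ?_))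
      rw [← inv_inv a, e', mul_inv_rev, inv_inv]
  · have q2 : w (a⁻¹ * g) = w (a * g) := by omega
    have q3 : w (g * a) = w (a * g) := by omega
    have q4 : w (g * a⁻¹) = w (a * g) := by omega
    rcases lee_bII ((hcls _ _).1 q2) ((hcls _ _).1 q3) ((hcls _ _).1 q4) with h | h
    · exact Or.inr (Or.inr (Or.inl h))
    · exact Or.inr (Or.inr (Or.inr h))

/-- If `G` is not cyclic, the subgroup generated by its elements of order 2 or 4
is proper, and the center of `G` has no element of order 2, then `G` has no Lee
weight. -/
theorem no_leeWeight_of_not_cyclic {G : Type*} [Group G]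
    (hnc : ¬ IsCyclic G)
    (h24 : Subgroup.closure {x : G | orderOf x = 2 ∨ orderOf x = 4} ≠ ⊤)
    (hz : ∀ x ∈ Subgroup.center G, orderOf x ≠ 2) :
    ¬ HasLeeWeight G := by
  rintro ⟨w, ⟨h0, hinv, htri⟩, hgap, hcls⟩
  classical
  have w1 : w (1 : G) = 0 := (h0 1).2 rfl
  -- a nontrivial element exists
  obtain ⟨x0, hx0⟩ : ∃ x : G, x ≠ (1 : G) := by
    by_contra h
    push_neg at h
    exact hnc ⟨⟨1, fun x => by rw [h x]; exact Subgroup.mem_zpowers 1⟩⟩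
  -- an element of weight 1
  obtain ⟨a, ha⟩ : ∃ a : G, w a = 1 := by
    refine hgap x0 1 ?_
    have hne : w x0 ≠ 0 := fun h => hx0 ((h0 x0).1 h)
    omega
  have ha1 : a ≠ 1 := by
    intro h
    rw [h, w1] at ha
    simp at ha
  -- powers of a cannot all have weight n
  have exn : ∃ n : ℕ, w (a ^ n) ≠ n := by
    by_contra hall
    push_neg at hall
    refine hnc ⟨⟨a, fun x => ?_⟩⟩
    have hx : w x = w (a ^ (w x)) := (hall (w x)).symm
    rcases (hcls _ _).1 hx with h | h
    · exact Subgroup.mem_zpowers_iff.2 ⟨(w x : ℤ), by rw [zpow_natCast]; exact h.symm⟩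
    · exact Subgroup.mem_zpowers_iff.2
        ⟨-(w x : ℤ), by rw [zpow_neg, zpow_natCast]; exact h.symm⟩
  obtain ⟨c', hcsp, hmin⟩ : ∃ c', w (a ^ c') ≠ c' ∧ ∀ m, m < c' → w (a ^ m) = m :=
    ⟨Nat.find exn, Nat.find_spec exn, fun m hm => not_not.mp (Nat.find_min exn hm)⟩
  have hc2 : 2 ≤ c' := by
    by_contra h
    push_neg at h
    have h01 : c' = 0 ∨ c' = 1 := by omega
    rcases h01 with h' | h'
    · exact hcsp (by rw [h', pow_zero]; exact w1)
    · exact hcsp (by rw [h', pow_one]; exact ha)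
  -- a has finite order
  have hford : IsOfFinOrder a := by
    have hkle : w (a ^ c') ≤ c' := by
      have e : (a : G) ^ c' = a ^ (c' - 1) * a := by
        rw [← pow_succ]
        congr 1
        omega
      rw [e]
      have h1 := htri (a ^ (c' - 1)) a
      rw [hmin (c' - 1) (by omega), ha] at h1
      omega
    have hklt : w (a ^ c') < c' := by omega
    have heq : w (a ^ c') = w (a ^ (w (a ^ c'))) := (hmin _ hklt).symm
    rcases (hcls _ _).1 heq with h | h
    · refine isOfFinOrder_iff_pow_eq_one.2 ⟨c' - w (a ^ c'), by omega, ?_⟩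
      have e : a ^ (c' - w (a ^ c')) * a ^ (w (a ^ c')) = a ^ c' := by
        rw [← pow_add]; congr 1; omega
      have e2 : a ^ (c' - w (a ^ c')) * a ^ (w (a ^ c')) = 1 * a ^ (w (a ^ c')) := by
        rw [e, one_mul]; exact h
      exact mul_right_cancel e2
    · refine isOfFinOrder_iff_pow_eq_one.2 ⟨c' + w (a ^ c'), by omega, ?_⟩
      rw [pow_add]
      nth_rewrite 1 [h]
      group
  -- elements of weight < c' commute with a
  have hbase : ∀ g : G, w g < c' → a * g = g * a := by
    intro g hg
    have heq : w g = w (a ^ (w g)) := (hmin _ hg).symm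
    rcases (hcls _ _).1 heq with h | h
    · have e := ((Commute.refl a).pow_right (w g)).eq
      rw [← h] at e
      exact e
    · have e := (((Commute.refl a).pow_right (w g)).inv_right).eq
      rw [← h] at e
      exact e
  by_cases ha4 : (a * a) * (a * a) = 1
  · -- Case 1: a has order 2 or 4, so a lies in T := closure of order-2/4 elements.
    set T := Subgroup.closure {x : G | orderOf x = 2 ∨ orderOf x = 4} with hT
    have hmemT : ∀ x : G, x ≠ 1 → (x * x) * (x * x) = 1 → x ∈ T := by
      intro x hx hx4
      have h4 : x ^ 4 = 1 := by
        have e : x ^ 4 = (x * x) * (x * x) := by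
          rw [show (4 : ℕ) = 2 + 2 from rfl, pow_add, pow_two]
        rw [e, hx4]
      have hdvd : orderOf x ∣ 4 := orderOf_dvd_of_pow_eq_one h4
      have hne1 : orderOf x ≠ 1 := by
        simpa [orderOf_eq_one_iff] using hx
      have hle : orderOf x ≤ 4 := Nat.le_of_dvd (by norm_num) hdvd
      have hzero : orderOf x ≠ 0 := by
        intro h'
        rw [h'] at hdvd
        exact absurd (Nat.eq_zero_of_zero_dvd hdvd) (by norm_num)
      have h3 : orderOf x ≠ 3 := by
        intro h'
        rw [h'] at hdvd
        omega
      have : orderOf x = 2 ∨ orderOf x = 4 := by omega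
      exact Subgroup.subset_closure this
    have haT : a ∈ T := hmemT a ha1 ha4
    -- every element outside T commutes with a
    have main : ∀ n : ℕ, ∀ g : G, w g = n → g ∉ T → a * g = g * a := by
      intro n
      induction n using Nat.strong_induction_on with
      | _ n IH =>
        intro g hgw hgT
        have hg1 : g ≠ 1 := fun e => hgT (by rw [e]; exact one_mem T)
        rcases lee_M w hinv htri hcls ha ha1 g with (h | h | h | h) | (h | h) | h | ⟨hg4, _⟩
        · have hpT : a * g ∉ T := fun hp => hgT (by
            have e : g = a⁻¹ * (a * g) := by group
            rw [e]; exact mul_mem (inv_mem haT) hp)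
          have hp := IH (w (a * g)) (by omega) (a * g) rfl hpT
          have h2 : a * (a * g) = a * (g * a) := by rw [hp]; group
          exact mul_left_cancel h2
        · have hpT : a⁻¹ * g ∉ T := fun hp => hgT (by
            have e : g = a * (a⁻¹ * g) := by group
            rw [e]; exact mul_mem haT hp)
          have hp := IH (w (a⁻¹ * g)) (by omega) (a⁻¹ * g) rfl hpT
          have h2 : a⁻¹ * (a * g) = a⁻¹ * (g * a) := by
            calc a⁻¹ * (a * g) = a * (a⁻¹ * g) := by group
              _ = (a⁻¹ * g) * a := hp
              _ = a⁻¹ * (g * a) := by group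
          exact mul_left_cancel h2
        · have hpT : g * a ∉ T := fun hp => hgT (by
            have e : g = (g * a) * a⁻¹ := by group
            rw [e]; exact mul_mem hp (inv_mem haT))
          have hp := IH (w (g * a)) (by omega) (g * a) rfl hpT
          have h2 : (a * g) * a = (g * a) * a := by
            calc (a * g) * a = a * (g * a) := by group
              _ = (g * a) * a := hp
          exact mul_right_cancel h2
        · have hpT : g * a⁻¹ ∉ T := fun hp => hgT (by
            have e : g = (g * a⁻¹) * a := by group
            rw [e]; exact mul_mem hp haT)
          have hp := IH (w (g * a⁻¹)) (by omega) (g * a⁻¹) rfl hpT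
          have h2 : (a * g) * a⁻¹ = (g * a) * a⁻¹ := by
            calc (a * g) * a⁻¹ = a * (g * a⁻¹) := by group
              _ = (g * a⁻¹) * a := hp
              _ = (g * a) * a⁻¹ := by group
          exact mul_right_cancel h2
        · rw [← h]; group
        · have h' : a = (g * g)⁻¹ := by rw [h]; group
          rw [h']; group
        · exact h
        · exact absurd (hmemT g hg1 hg4) hgT
    -- a is central
    obtain ⟨x1, hx1⟩ : ∃ x : G, x ∉ T := by
      by_contra h
      push_neg at h
      exact h24 ((Subgroup.eq_top_iff' T).2 h)
    have hcen : ∀ x : G, a * x = x * a := by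
      intro x
      by_cases hxT : x ∈ T
      · have hx2 : x * x1 ∉ T := fun hp => hx1 (by
          have e : x1 = x⁻¹ * (x * x1) := by group
          rw [e]; exact mul_mem (inv_mem hxT) hp)
        have c1 := main (w (x * x1)) (x * x1) rfl hx2
        have c2 := main (w x1) x1 rfl hx1
        have h2 : (a * x) * x1 = (x * a) * x1 := by
          calc (a * x) * x1 = a * (x * x1) := by group
            _ = (x * x1) * a := c1
            _ = x * (x1 * a) := by group
            _ = x * (a * x1) := by rw [← c2]
            _ = (x * a) * x1 := by group
        exact mul_right_cancel h2
      · exact main (w x) x rfl hxT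
    by_cases ha2 : a * a = 1
    · exact hz a (Subgroup.mem_center_iff.2 fun g => (hcen g).symm)
        (orderOf_eq_prime (by rw [pow_two]; exact ha2) ha1)
    · have hzc : ∀ g : G, (a * a) * g = g * (a * a) := by
        intro g
        calc (a * a) * g = a * (a * g) := by group
          _ = a * (g * a) := by rw [hcen g]
          _ = (a * g) * a := by group
          _ = (g * a) * a := by rw [hcen g]
          _ = g * (a * a) := by group
      exact hz (a * a) (Subgroup.mem_center_iff.2 fun g => (hzc g).symm)
        (orderOf_eq_prime (by rw [pow_two]; exact ha4) ha2)
  · -- Case 2: a^4 ≠ 1.  Then a is central.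
    have main : ∀ n : ℕ, ∀ g : G, w g = n → a * g = g * a := by
      intro n
      induction n using Nat.strong_induction_on with
      | _ n IH =>
        intro g hgw
        by_cases hn : w g < c'
        · exact hbase g hn
        rcases lee_M w hinv htri hcls ha ha1 g with (h | h | h | h) | (h | h) | h | ⟨_, h4⟩
        · have hp := IH (w (a * g)) (by omega) (a * g) rfl
          have h2 : a * (a * g) = a * (g * a) := by rw [hp]; group
          exact mul_left_cancel h2
        · have hp := IH (w (a⁻¹ * g)) (by omega) (a⁻¹ * g) rfl
          have h2 : a⁻¹ * (a * g) = a⁻¹ * (g * a) := by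
            calc a⁻¹ * (a * g) = a * (a⁻¹ * g) := by group
              _ = (a⁻¹ * g) * a := hp
              _ = a⁻¹ * (g * a) := by group
          exact mul_left_cancel h2
        · have hp := IH (w (g * a)) (by omega) (g * a) rfl
          have h2 : (a * g) * a = (g * a) * a := by
            calc (a * g) * a = a * (g * a) := by group
              _ = (g * a) * a := hp
          exact mul_right_cancel h2
        · have hp := IH (w (g * a⁻¹)) (by omega) (g * a⁻¹) rfl
          have h2 : (a * g) * a⁻¹ = (g * a) * a⁻¹ := by
            calc (a * g) * a⁻¹ = a * (g * a⁻¹) := by group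
              _ = (g * a⁻¹) * a := hp
              _ = (g * a) * a⁻¹ := by group
          exact mul_right_cancel h2
        · rw [← h]; group
        · have h' : a = (g * g)⁻¹ := by rw [h]; group
          rw [h']; group
        · exact h
        · exact absurd h4 ha4
    have hcomm : ∀ x : G, Commute a x := fun x => main (w x) x rfl
    have hnord : orderOf a ≠ 1 := fun e => ha1 (orderOf_eq_one_iff.mp e)
    have hnpos : 0 < orderOf a := hford.orderOf_pos
    rcases Nat.even_or_odd (orderOf a) with he | ho
    · -- orderOf a even: the half-power is a central involution
      obtain ⟨m, hm⟩ := he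
      have hmpos : 0 < m := by omega
      have hz2 : a ^ m * a ^ m = 1 := by
        rw [← pow_add, ← hm]
        exact pow_orderOf_eq_one a
      have hz1 : a ^ m ≠ 1 := by
        intro e
        have := Nat.le_of_dvd hmpos (orderOf_dvd_of_pow_eq_one e)
        omega
      exact hz (a ^ m)
        (Subgroup.mem_center_iff.2 fun g => (((hcomm g).pow_left m).eq).symm)
        (orderOf_eq_prime (by rw [pow_two]; exact hz2) hz1)
    · -- orderOf a odd
      have han : a ^ ((orderOf a : ℕ) : ℤ) = 1 := by
        rw [zpow_natCast]; exact pow_orderOf_eq_one a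
      -- every square lies in ⟨a⟩ (parity argument on the coset cycle)
      have hsq : ∀ g : G, g * g ∈ Subgroup.zpowers a := by
        intro g
        by_contra hg2
        have step : ∀ j : ℕ, w (g * a ^ (j + 1)) % 2 ≠ w (g * a ^ j) % 2 := by
          intro j
          have up : w (g * a ^ (j + 1)) ≤ w (g * a ^ j) + 1 := by
            have e : g * a ^ (j + 1) = (g * a ^ j) * a := by rw [pow_succ]; group
            rw [e]
            have := htri (g * a ^ j) a
            omega
          have dn : w (g * a ^ j) ≤ w (g * a ^ (j + 1)) + 1 := by
            have e : g * a ^ j = (g * a ^ (j + 1)) * a⁻¹ := by rw [pow_succ]; group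
            rw [e]
            have t := htri (g * a ^ (j + 1)) a⁻¹
            have t2 := hinv a
            omega
          have hne : w (g * a ^ (j + 1)) ≠ w (g * a ^ j) := by
            intro he
            rcases (hcls _ _).1 he with h | h
            · have h' : a ^ (j + 1) = a ^ j := mul_left_cancel h
              rw [pow_succ] at h'
              exact ha1 (mul_left_cancel (show a ^ j * a = a ^ j * 1 by rw [mul_one]; exact h'))
            · have hc : a ^ (j + 1) * g = g * a ^ (j + 1) := ((hcomm g).pow_left (j + 1)).eq
              have e0 : a ^ (j + 1) * g = (a ^ j)⁻¹ * g⁻¹ := by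
                rw [hc, h, mul_inv_rev]
              have e1 : g * g = (a ^ (j + 1))⁻¹ * (a ^ j)⁻¹ := by
                calc g * g = (a ^ (j + 1))⁻¹ * (a ^ (j + 1) * g) * g := by group
                  _ = (a ^ (j + 1))⁻¹ * ((a ^ j)⁻¹ * g⁻¹) * g := by rw [e0]
                  _ = (a ^ (j + 1))⁻¹ * (a ^ j)⁻¹ := by group
              exact hg2 (by
                rw [e1]
                exact mul_mem (inv_mem (pow_mem (Subgroup.mem_zpowers a) _))
                  (inv_mem (pow_mem (Subgroup.mem_zpowers a) _)))
          omega
        have par : ∀ j : ℕ, (w (g * a ^ j) + j) % 2 = w (g * a ^ 0) % 2 := by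
          intro j
          induction j with
          | zero => simp
          | succ j ih =>
            have := step j
            omega
        have hfn : w (g * a ^ (orderOf a)) = w (g * a ^ 0) := by
          rw [pow_orderOf_eq_one, pow_zero]
        have hpar := par (orderOf a)
        rw [hfn] at hpar
        obtain ⟨m, hm⟩ := ho
        omega
      -- G is abelian
      have hab : ∀ g h : G, g * h = h * g := by
        intro g h
        obtain ⟨k1, hk1⟩ := Subgroup.mem_zpowers_iff.1 (hsq (g * h))
        obtain ⟨k2, hk2⟩ := Subgroup.mem_zpowers_iff.1 (hsq g)
        obtain ⟨k3, hk3⟩ := Subgroup.mem_zpowers_iff.1 (hsq h)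
        have e2c : (g * g)⁻¹ * h = h * (g * g)⁻¹ := by
          rw [← hk2]
          exact (((hcomm h).zpow_left k2).inv_left).eq
        have hq : g * h * g⁻¹ * h⁻¹ = a ^ (k1 + (-k2 + -k3)) := by
          calc g * h * g⁻¹ * h⁻¹ = g * h * g * ((g * g)⁻¹ * h) * (h * h)⁻¹ := by group
            _ = g * h * g * (h * (g * g)⁻¹) * (h * h)⁻¹ := by rw [e2c]
            _ = ((g * h) * (g * h)) * ((g * g)⁻¹ * (h * h)⁻¹) := by group
            _ = (a ^ k1) * ((a ^ k2)⁻¹ * (a ^ k3)⁻¹) := by rw [← hk1, ← hk2, ← hk3]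
            _ = a ^ (k1 + (-k2 + -k3)) := by
              rw [← zpow_neg, ← zpow_neg, ← zpow_add, ← zpow_add]
        have hE : g * h = a ^ (k1 + (-k2 + -k3)) * (h * g) := by
          calc g * h = (g * h * g⁻¹ * h⁻¹) * (h * g) := by group
            _ = a ^ (k1 + (-k2 + -k3)) * (h * g) := by rw [hq]
        have hcomK : h * a ^ (k1 + (-k2 + -k3)) = a ^ (k1 + (-k2 + -k3)) * h :=
          (((hcomm h).zpow_left (k1 + (-k2 + -k3))).eq).symm
        have ha2K : a ^ (k1 + (-k2 + -k3)) * a ^ (k1 + (-k2 + -k3))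
            = a ^ (2 * (k1 + (-k2 + -k3))) := by
          rw [← zpow_add]; congr 1; ring
        have e1 : g * (h * h) = a ^ (2 * (k1 + (-k2 + -k3))) * ((h * h) * g) := by
          calc g * (h * h) = (g * h) * h := by group
            _ = (a ^ (k1 + (-k2 + -k3)) * (h * g)) * h := by rw [hE]
            _ = a ^ (k1 + (-k2 + -k3)) * (h * (g * h)) := by group
            _ = a ^ (k1 + (-k2 + -k3)) * (h * (a ^ (k1 + (-k2 + -k3)) * (h * g))) := by
                rw [hE]
            _ = a ^ (k1 + (-k2 + -k3)) * ((h * a ^ (k1 + (-k2 + -k3))) * (h * g)) := by group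
            _ = a ^ (k1 + (-k2 + -k3)) * ((a ^ (k1 + (-k2 + -k3)) * h) * (h * g)) := by
                rw [hcomK]
            _ = (a ^ (k1 + (-k2 + -k3)) * a ^ (k1 + (-k2 + -k3))) * ((h * h) * g) := by group
            _ = a ^ (2 * (k1 + (-k2 + -k3))) * ((h * h) * g) := by rw [ha2K]
        have e2 : g * (h * h) = (h * h) * g := by
          rw [← hk3]
          exact (((hcomm g).zpow_left k3).eq).symm
        have e3 : a ^ (2 * (k1 + (-k2 + -k3))) * ((h * h) * g) = 1 * ((h * h) * g) := by
          rw [one_mul]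
          exact e1.symm.trans e2
        have h2K : a ^ (2 * (k1 + (-k2 + -k3))) = 1 := mul_right_cancel e3
        have hdvd2K : ((orderOf a : ℕ) : ℤ) ∣ 2 * (k1 + (-k2 + -k3)) :=
          orderOf_dvd_iff_zpow_eq_one.mpr h2K
        have hcop : IsCoprime ((orderOf a : ℕ) : ℤ) 2 := by
          obtain ⟨m, hm⟩ := ho
          have hgcd : Nat.gcd (orderOf a) 2 = 1 := by
            have hd1 : Nat.gcd (orderOf a) 2 ∣ 2 := Nat.gcd_dvd_right _ _
            have hd2 : Nat.gcd (orderOf a) 2 ∣ orderOf a := Nat.gcd_dvd_left _ _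
            rcases (Nat.dvd_prime Nat.prime_two).1 hd1 with h' | h'
            · exact h'
            · exfalso
              rw [h'] at hd2
              omega
          rw [Int.isCoprime_iff_gcd_eq_one]
          rw [show ((2 : ℤ)) = ((2 : ℕ) : ℤ) by norm_num, Int.gcd_natCast_natCast]
          exact hgcd
        have hK : ((orderOf a : ℕ) : ℤ) ∣ (k1 + (-k2 + -k3)) :=
          hcop.dvd_of_dvd_mul_right (by rwa [mul_comm] at hdvd2K)
        have haK : a ^ (k1 + (-k2 + -k3)) = 1 := by
          obtain ⟨t, ht⟩ := hK
          rw [ht, zpow_mul, han, one_zpow]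
        rw [hE, haK, one_mul]
      -- an element outside ⟨a⟩ yields a central involution
      obtain ⟨g0, hg0⟩ : ∃ x : G, x ∉ Subgroup.zpowers a := by
        by_contra hcon
        push_neg at hcon
        exact hnc ⟨⟨a, hcon⟩⟩
      obtain ⟨k, hk⟩ := Subgroup.mem_zpowers_iff.1 (hsq g0)
      obtain ⟨m, hm⟩ := ho
      have hmz : ((orderOf a : ℕ) : ℤ) = 2 * (m : ℤ) + 1 := by exact_mod_cast hm
      have ht2 : (g0 * a ^ (-k * ((m : ℤ) + 1))) * (g0 * a ^ (-k * ((m : ℤ) + 1))) = 1 := by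
        calc (g0 * a ^ (-k * ((m : ℤ) + 1))) * (g0 * a ^ (-k * ((m : ℤ) + 1)))
            = g0 * (a ^ (-k * ((m : ℤ) + 1)) * g0) * a ^ (-k * ((m : ℤ) + 1)) := by group
          _ = g0 * (g0 * a ^ (-k * ((m : ℤ) + 1))) * a ^ (-k * ((m : ℤ) + 1)) := by
              rw [((hcomm g0).zpow_left (-k * ((m : ℤ) + 1))).eq]
          _ = (g0 * g0) * (a ^ (-k * ((m : ℤ) + 1)) * a ^ (-k * ((m : ℤ) + 1))) := by group
          _ = a ^ k * (a ^ (-k * ((m : ℤ) + 1)) * a ^ (-k * ((m : ℤ) + 1))) := by rw [← hk]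
          _ = a ^ (k + (-k * ((m : ℤ) + 1) + -k * ((m : ℤ) + 1))) := by
              rw [← zpow_add, ← zpow_add]
          _ = (a ^ ((orderOf a : ℕ) : ℤ)) ^ (-k) := by
              rw [← zpow_mul]
              congr 1
              rw [hmz]
              ring
          _ = 1 := by rw [han, one_zpow]
      have ht1 : g0 * a ^ (-k * ((m : ℤ) + 1)) ≠ 1 := by
        intro he
        apply hg0
        have e : g0 = (a ^ (-k * ((m : ℤ) + 1)))⁻¹ := by
          have := congrArg (· * (a ^ (-k * ((m : ℤ) + 1)))⁻¹) he
          simpa using this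
        rw [e]
        exact inv_mem (Subgroup.zpow_mem _ (Subgroup.mem_zpowers a) _)
      exact hz _ (Subgroup.mem_center_iff.2 fun g => hab g _)
        (orderOf_eq_prime (by rw [pow_two]; exact ht2) ht1)
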